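/- Let 0 < a₁ < a₂ < a₃, a, b, c ∈ ℝ, λ < 0, ε > 0, x₀ = (a/(λ−a₁), b/(λ−a₂), c/(λ−a₃)), m(x) = (a₁x₁ + a, a₂x₂ + b, a₃x₃ + c), and K(z) = ½(a₁z₁² + a₂z₂² + a₃z₃²) − (λ/2)‖z‖². If x : ℝ → ℝ³ is a differentiable solution of ẋ = x × m(x) + ε (x × m(x)) × m(x) and z(t) = x(t) − x₀, then d/dt K(z(t)) = ε λ ‖x(t) × m(x(t))‖² ≤ 0. -/

import Mathlib

noncomputable def cross (u v : EuclideanSpace ℝ (Fin 3)) : EuclideanSpace ℝ (Fin 3) :=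
  WithLp.toLp 2 ![u 1 * v 2 - u 2 * v 1, u 2 * v 0 - u 0 * v 2, u 0 * v 1 - u 1 * v 0]

private lemma nsq (z : EuclideanSpace ℝ (Fin 3)) : ‖z‖ ^ 2 = z 0 ^ 2 + z 1 ^ 2 + z 2 ^ 2 := by
  rw [EuclideanSpace.norm_eq, Real.sq_sqrt (by positivity)]
  simp [Fin.sum_univ_three, Real.norm_eq_abs, sq_abs]

theorem stmt19 (a₁ a₂ a₃ a b c lam ε : ℝ) (h1 : 0 < a₁) (h12 : a₁ < a₂) (h23 : a₂ < a₃)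
    (hlam : lam < 0) (hε : 0 < ε)
    (x₀ : EuclideanSpace ℝ (Fin 3))
    (hx₀ : x₀ = ![a / (lam - a₁), b / (lam - a₂), c / (lam - a₃)])
    (m : EuclideanSpace ℝ (Fin 3) → EuclideanSpace ℝ (Fin 3))
    (hm : ∀ x : EuclideanSpace ℝ (Fin 3),
      m x = (WithLp.toLp 2 ![a₁ * x 0 + a, a₂ * x 1 + b, a₃ * x 2 + c] : EuclideanSpace ℝ (Fin 3)))
    (K : EuclideanSpace ℝ (Fin 3) → ℝ)
    (hK : ∀ z : EuclideanSpace ℝ (Fin 3),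
      K z = (1 / 2) * (a₁ * (z 0) ^ 2 + a₂ * (z 1) ^ 2 + a₃ * (z 2) ^ 2)
        - (lam / 2) * ‖z‖ ^ 2)
    (x : ℝ → EuclideanSpace ℝ (Fin 3))
    (hx : ∀ t : ℝ, HasDerivAt x
      (cross (x t) (m (x t)) + ε • cross (cross (x t) (m (x t))) (m (x t))) t) :
    ∀ t : ℝ, HasDerivAt (fun s => K (x s - x₀)) (ε * lam * ‖cross (x t) (m (x t))‖ ^ 2) t ∧
      ε * lam * ‖cross (x t) (m (x t))‖ ^ 2 ≤ 0 := by
  intro t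
  have hne1 : lam - a₁ ≠ 0 := by nlinarith
  have hne2 : lam - a₂ ≠ 0 := by nlinarith
  have hne3 : lam - a₃ ≠ 0 := by nlinarith
  constructor
  · set V : EuclideanSpace ℝ (Fin 3) :=
      cross (x t) (m (x t)) + ε • cross (cross (x t) (m (x t))) (m (x t)) with hV
    have hp : ∀ i : Fin 3, HasDerivAt (fun s => x s i) (V i) t := fun i => by
      simpa [hV, Function.comp_def] using (EuclideanSpace.proj (𝕜 := ℝ) i).hasFDerivAt.comp_hasDerivAt t (hx t)
    have hd : HasDerivAt
        (fun s => (a₁ - lam) / 2 * (x s 0 - x₀ 0) ^ 2 + (a₂ - lam) / 2 * (x s 1 - x₀ 1) ^ 2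
          + (a₃ - lam) / 2 * (x s 2 - x₀ 2) ^ 2)
        ((a₁ - lam) / 2 * (2 * (x t 0 - x₀ 0) ^ 1 * V 0)
          + (a₂ - lam) / 2 * (2 * (x t 1 - x₀ 1) ^ 1 * V 1)
          + (a₃ - lam) / 2 * (2 * (x t 2 - x₀ 2) ^ 1 * V 2)) t := by
      exact (((((hp 0).sub_const _).pow 2).const_mul _).add
        ((((hp 1).sub_const _).pow 2).const_mul _)).add
        ((((hp 2).sub_const _).pow 2).const_mul _)
    have hfun : (fun s => K (x s - x₀)) =
        (fun s => (a₁ - lam) / 2 * (x s 0 - x₀ 0) ^ 2 + (a₂ - lam) / 2 * (x s 1 - x₀ 1) ^ 2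
          + (a₃ - lam) / 2 * (x s 2 - x₀ 2) ^ 2) := by
      funext s
      rw [hK, nsq]
      simp only [PiLp.sub_apply]
      ring
    rw [hfun]
    convert hd using 1
    rw [nsq]
    simp only [hV, hm, hx₀, cross, PiLp.add_apply, PiLp.smul_apply, smul_eq_mul, PiLp.toLp_apply,
      Matrix.cons_val_zero, Matrix.cons_val_one, Matrix.head_cons, Matrix.cons_val_two,
      Matrix.tail_cons]
    field_simp
    ring
  · have h0 : 0 ≤ ‖cross (x t) (m (x t))‖ ^ 2 := sq_nonneg _
    have : ε * lam ≤ 0 := by nlinarith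
    exact mul_nonpos_of_nonpos_of_nonneg this h0
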